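/- Let B be a basis of the multi-path matroid M[ℐ] with valid representation Π(B, p_i) in the diagram D(ℐ, 1), with respect to the linear order 1 < 2 < ⋯ < m+r. An element u ∈ B is internally active with respect to B if and only if either (a) {1, 2, …, u} ⊆ B, or (b) the u-th step of Π(B, p_i) lies in the top border Q and the subpath consisting of steps u+1 through m+r touches the bottom border P. -/

import Mathlib

open Set Matroid

variable {α ι : Type*}

/-- `M` is the transversal matroid on ground set `S` presented by the set system `A`:
the independent sets of `M` are exactly the partial transversals of `A`. -/
def IsTransversalPres (M : Matroid α) (S : Set α) (A : ι → Set α) : Prop :=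
  M.E = S ∧ ∀ I : Set α, M.Indep I ↔ I ⊆ S ∧
    ∃ φ : I → ι, Function.Injective φ ∧ ∀ x : I, (x : α) ∈ A (φ x)

/-- `σ` is a cyclic permutation of the set `E`. -/
def IsCyclicOn (σ : Equiv.Perm α) (E : Set α) : Prop :=
  (∀ x ∉ E, σ x = x) ∧ ∀ x ∈ E, ∀ y ∈ E, ∃ n : ℕ, (σ ^ n) x = y

/-- `I` is the σ-interval with first element `f` and last element `l`. -/
def IsCycInterval (σ : Equiv.Perm α) (f l : α) (I : Set α) : Prop :=
  ∃ k : ℕ, (σ ^ k) f = l ∧ I = {x | ∃ j ≤ k, (σ ^ j) f = x}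

/-- The family of sets `A` is an antichain: no member contains another. -/
def IsSetAntichain (A : ι → Set α) : Prop := ∀ i j, i ≠ j → ¬ A i ⊆ A j

/-- `A` (with first elements `f` and last elements `l`) is a presentation of `M` by an
antichain of σ-intervals in the cyclic permutation `σ` of the ground set. -/
def IsMultiPathPres (M : Matroid α) (σ : Equiv.Perm α) {r : ℕ}
    (f l : Fin r → α) (A : Fin r → Set α) : Prop :=
  IsCyclicOn σ M.E ∧ (∀ i, f i ∈ M.E) ∧ (∀ i, IsCycInterval σ (f i) (l i) (A i)) ∧
  IsSetAntichain A ∧ IsTransversalPres M M.E A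

/-- A multi-path matroid: a transversal matroid with a presentation by an antichain of
σ-intervals in some cyclic permutation of the ground set. -/
def IsMultiPath (M : Matroid α) : Prop :=
  ∃ (σ : Equiv.Perm α) (r : ℕ) (f : Fin r → α) (l : Fin r → α) (A : Fin r → Set α),
    IsMultiPathPres M σ f l A

/-- A lattice path matroid: a transversal matroid with a presentation by an antichain of
(nonempty) intervals in some linear order (encoded by an injection `g` into `ℕ`) on the
ground set. -/
def IsLatticePathM (M : Matroid α) : Prop :=
  ∃ g : α → ℕ, Set.InjOn g M.E ∧
    ∃ (r : ℕ) (A : Fin r → Set α) (a b : Fin r → ℕ),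
      (∀ i, A i = {x ∈ M.E | a i ≤ g x ∧ g x ≤ b i}) ∧ (∀ i, (A i).Nonempty) ∧
      IsSetAntichain A ∧ IsTransversalPres M M.E A

/-- Deletion `M \ X`. -/
def mDelete (M : Matroid α) (X : Set α) : Matroid α := M ↾ (M.E \ X)

/-- Contraction `M / X`. -/
def mContract (M : Matroid α) (X : Set α) : Matroid α := (mDelete M✶ X)✶

/-- `N` is a minor of `M`. -/
def IsMinorOf (N M : Matroid α) : Prop :=
  ∃ C D : Set α, C ⊆ M.E ∧ D ⊆ M.E ∧ Disjoint C D ∧ N = mDelete (mContract M C) D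

/-- `C` is a circuit of `M`: a minimal dependent set. -/
def IsCircuitOf (M : Matroid α) (C : Set α) : Prop :=
  M.Dep C ∧ ∀ D ⊂ C, ¬ M.Dep D

/-- `C` is a cocircuit of `M`: a circuit of the dual. -/
def IsCocircuitOf (M : Matroid α) (C : Set α) : Prop := IsCircuitOf M✶ C

/-- `M` is connected: it has no loops and every pair of distinct elements of the
ground set lies in a common circuit. -/
def IsConnectedM (M : Matroid α) : Prop :=
  (∀ e ∈ M.E, M.Indep {e}) ∧
  ∀ x ∈ M.E, ∀ y ∈ M.E, x ≠ y → ∃ C, IsCircuitOf M C ∧ x ∈ C ∧ y ∈ C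

/-- The height of the lattice path with set of North steps `w` after its first `t` steps. -/
noncomputable def pathHt {n : ℕ} (w : Set (Fin n)) (t : ℕ) : ℕ := (w ∩ {j | (j : ℕ) < t}).ncard

/-- `w` is (the set of North steps of) a lattice path from `(0,0)` to `(m,r)` going
neither below `P` nor above `Q`. -/
def IsPathBetween (m r : ℕ) (P Q w : Set (Fin (m + r))) : Prop :=
  pathHt w (m + r) = r ∧ ∀ t ≤ m + r, pathHt P t ≤ pathHt w t ∧ pathHt w t ≤ pathHt Q t

/-- The data `(k, m, r, P, Q)` is a diagram: `P` and `Q` are lattice paths with `m` East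
and `r` North steps (starting at `p_1 = (k-1,0)` and `p_k = (0,k-1)` respectively) and,
comparing heights along antidiagonals, `Q` never goes below `P`. -/
def IsDiagram (k m r : ℕ) (P Q : Set (Fin (m + r))) : Prop :=
  1 ≤ k ∧ pathHt P (m + r) = r ∧ pathHt Q (m + r) = r ∧
    ∀ t ≤ m + r, pathHt P t ≤ k - 1 + pathHt Q t

/-- `w` is a b-path of the diagram `(k, m, r, P, Q)` from the starting point
`p_i = (k-i, i-1)` to the ending point `p'_i`: it stays weakly above `P` and weakly
below `Q` (heights compared along antidiagonals). -/
def IsBPath (k m r : ℕ) (P Q : Set (Fin (m + r))) (i : ℕ) (w : Set (Fin (m + r))) : Prop :=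
  1 ≤ i ∧ i ≤ k ∧ pathHt w (m + r) = r ∧
  ∀ t ≤ m + r, pathHt P t ≤ i - 1 + pathHt w t ∧ i - 1 + pathHt w t ≤ k - 1 + pathHt Q t

/-- A matroid isomorphism between matroids on possibly different types. -/
def MatroidIso {β : Type*} (M : Matroid α) (N : Matroid β) : Prop :=
  ∃ e : α → β, Set.BijOn e M.E N.E ∧ ∀ B ⊆ M.E, (M.IsBase B ↔ N.IsBase (e '' B))

/-- `b` is the first element of `X` encountered strictly after `a` in the cyclic order `σ`
(i.e. `b` is the image of `a` under the cyclic permutation induced by `σ` on `X`). -/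
def CycNextIn (σ : Equiv.Perm α) (X : Set α) (a b : α) : Prop :=
  ∃ n : ℕ, 1 ≤ n ∧ (σ ^ n) a = b ∧ ∀ j, 1 ≤ j → j < n → (σ ^ j) a ∉ X


section StmtAux
open Finset
open scoped Classical
open Fin.NatCast Fin.CommRing

variable {n rr : ℕ}

lemma pathHt_eq_card (w : Set (Fin n)) (t : ℕ) :
    pathHt w t = (Finset.univ.filter (fun j : Fin n => j ∈ w ∧ (j:ℕ) < t)).card := by
  rw [pathHt, Set.ncard_eq_toFinset_card']
  apply congrArg Finset.card
  ext j
  simp [Set.mem_toFinset]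

lemma pathHt_of_inj (g : Fin rr → Fin n) (hg : Function.Injective g) (t : ℕ) :
    pathHt {e | ∃ j, g j = e} t
      = (Finset.univ.filter (fun j : Fin rr => ((g j : ℕ)) < t)).card := by
  rw [pathHt_eq_card, ← Finset.card_image_of_injective _ hg]
  apply congrArg Finset.card
  ext e
  simp only [Finset.mem_image, Finset.mem_filter, Finset.mem_univ, true_and, Set.mem_setOf_eq]
  constructor
  · rintro ⟨⟨j, rfl⟩, h⟩; exact ⟨j, h, rfl⟩
  · rintro ⟨j, h, rfl⟩; exact ⟨⟨j, rfl⟩, h⟩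

lemma pathHt_emptyset (t : ℕ) : pathHt (∅ : Set (Fin n)) t = 0 := by
  rw [pathHt_eq_card]
  simp

lemma count_key {k : ℕ} (hn : 0 < n) (a bv xv : Fin rr → ℕ)
    (hmem : ∀ j, (a j ≤ xv j ∧ xv j ≤ bv j) ∨ (a j ≤ xv j + n ∧ xv j + n ≤ bv j))
    (hb2 : ∀ j, bv j < 2 * n)
    (hk : k - 1 = (Finset.univ.filter (fun j => n ≤ bv j)).card)
    (t t' : ℕ) :
    (Finset.univ.filter (fun j => bv j % n < t)).card
      + (Finset.univ.filter (fun j => xv j < t')).card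
    ≤ (k - 1) + (Finset.univ.filter (fun j => a j < t')).card
      + (Finset.univ.filter (fun j => xv j < t)).card := by
  rw [hk]
  simp only [Finset.card_filter]
  rw [← Finset.sum_add_distrib, ← Finset.sum_add_distrib, ← Finset.sum_add_distrib]
  apply Finset.sum_le_sum
  intro j _
  have h1 := hmem j
  have h2 := hb2 j
  have hmod : bv j % n = if n ≤ bv j then bv j - n else bv j := by
    split_ifs with h
    · rw [Nat.mod_eq_sub_mod h, Nat.mod_eq_of_lt (by omega)]
    · exact Nat.mod_eq_of_lt (by omega)
  rw [hmod]
  split_ifs <;> omega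

section B2
variable {n : ℕ}

lemma pathHt_mono (w : Set (Fin n)) {t t' : ℕ} (h : t ≤ t') : pathHt w t ≤ pathHt w t' := by
  rw [pathHt_eq_card, pathHt_eq_card]
  apply Finset.card_le_card
  intro j hj
  simp only [Finset.mem_filter, Finset.mem_univ, true_and] at hj ⊢
  exact ⟨hj.1, lt_of_lt_of_le hj.2 h⟩

lemma pathHt_zero (w : Set (Fin n)) : pathHt w 0 = 0 := by
  rw [pathHt_eq_card]
  simp

lemma pathHt_succ_mem (w : Set (Fin n)) {t : ℕ} {j0 : Fin n} (hj0 : j0 ∈ w)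
    (hv : (j0:ℕ) = t) : pathHt w (t + 1) = pathHt w t + 1 := by
  rw [pathHt_eq_card, pathHt_eq_card]
  have : Finset.univ.filter (fun j : Fin n => j ∈ w ∧ (j:ℕ) < t + 1)
      = insert j0 (Finset.univ.filter (fun j : Fin n => j ∈ w ∧ (j:ℕ) < t)) := by
    ext j
    simp only [Finset.mem_filter, Finset.mem_univ, true_and, Finset.mem_insert]
    constructor
    · rintro ⟨hw, hlt⟩
      rcases Nat.lt_succ_iff_lt_or_eq.1 hlt with h | h
      · exact Or.inr ⟨hw, h⟩
      · exact Or.inl (Fin.ext (by omega))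
    · rintro (rfl | ⟨hw, hlt⟩)
      · exact ⟨hj0, by omega⟩
      · exact ⟨hw, by omega⟩
  rw [this, Finset.card_insert_of_notMem (by simp [hv])]

lemma pathHt_succ_notmem (w : Set (Fin n)) {t : ℕ}
    (h : ∀ j : Fin n, (j:ℕ) = t → j ∉ w) : pathHt w (t + 1) = pathHt w t := by
  rw [pathHt_eq_card, pathHt_eq_card]
  apply congrArg Finset.card
  ext j
  simp only [Finset.mem_filter, Finset.mem_univ, true_and]
  constructor
  · rintro ⟨hw, hlt⟩
    refine ⟨hw, ?_⟩
    rcases Nat.lt_succ_iff_lt_or_eq.1 hlt with h' | h'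
    · exact h'
    · exact absurd hw (h j h')
  · rintro ⟨hw, hlt⟩
    exact ⟨hw, by omega⟩

lemma pathHt_succ_le (w : Set (Fin n)) (t : ℕ) : pathHt w (t + 1) ≤ pathHt w t + 1 := by
  by_cases h : ∃ j0 : Fin n, (j0:ℕ) = t ∧ j0 ∈ w
  · obtain ⟨j0, hv, hw⟩ := h
    rw [pathHt_succ_mem w hw hv]
  · push_neg at h
    rw [pathHt_succ_notmem w (fun j hj => h j hj)]
    omega

lemma pathHt_le_self (w : Set (Fin n)) (t : ℕ) : pathHt w t ≤ t := by
  induction t with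
  | zero => rw [pathHt_zero]
  | succ t ih => have := pathHt_succ_le w t; omega

lemma pathHt_le_add (w : Set (Fin n)) {t t' : ℕ} (h : t ≤ t') :
    pathHt w t' ≤ pathHt w t + (t' - t) := by
  induction t' with
  | zero => have : t = 0 := by omega
            subst this; simp
  | succ t'' ih =>
    rcases Nat.lt_or_ge t (t''+1) with h' | h'
    · have h2 := ih (by omega)
      have := pathHt_succ_le w t''
      omega
    · have : t = t'' + 1 := by omega
      subst this; simp

lemma pathHt_add_le (w : Set (Fin n)) {t t' : ℕ} (h : t ≤ t') (hn : t' ≤ n)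
    (hfull : ∀ j : Fin n, t ≤ (j:ℕ) → (j:ℕ) < t' → j ∈ w) :
    pathHt w t + (t' - t) ≤ pathHt w t' := by
  induction t' with
  | zero => have : t = 0 := by omega
            subst this; simp
  | succ t'' ih =>
    rcases Nat.lt_or_ge t (t''+1) with h' | h'
    · have hmem : (⟨t'', by omega⟩ : Fin n) ∈ w := hfull _ (by simp; omega) (by simp)
      have hstep : pathHt w (t'' + 1) = pathHt w t'' + 1 :=
        pathHt_succ_mem w hmem (by simp)
      rw [hstep]
      have := ih (by omega) (by omega) (fun j hj1 hj2 => hfull j hj1 (by omega))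
      omega
    · have : t = t'' + 1 := by omega
      subst this; simp

lemma pathHt_ge_full (w : Set (Fin n)) {t : ℕ} (hn : t ≤ n)
    (hfull : ∀ j : Fin n, (j:ℕ) < t → j ∈ w) : t ≤ pathHt w t := by
  have := pathHt_add_le w (Nat.zero_le t) hn (fun j _ hj2 => hfull j hj2)
  rw [pathHt_zero] at this
  omega

lemma pathHt_univ_eq (w : Set (Fin n)) : pathHt w n = w.ncard := by
  rw [pathHt]
  congr 1
  rw [Set.inter_eq_self_of_subset_left]
  intro j _
  simp [j.isLt]

lemma pathHt_insert {w : Set (Fin n)} {v : Fin n} (hv : v ∉ w) (t : ℕ) :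
    pathHt (insert v w) t = pathHt w t + if (v:ℕ) < t then 1 else 0 := by
  unfold pathHt
  split_ifs with h
  · rw [Set.insert_inter_of_mem (show v ∈ {j : Fin n | (j:ℕ) < t} from h)]
    rw [Set.ncard_insert_of_notMem (fun hc => hv hc.1) (Set.toFinite _)]
  · rw [Set.insert_inter_of_notMem (show v ∉ {j : Fin n | (j:ℕ) < t} from h)]
    omega

lemma pathHt_diff {w : Set (Fin n)} {u : Fin n} (hu : u ∈ w) (t : ℕ) :
    pathHt (w \ {u}) t + (if (u:ℕ) < t then 1 else 0) = pathHt w t := by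
  have h1 : u ∉ w \ {u} := by simp
  have h2 : insert u (w \ {u}) = w := by
    rw [Set.insert_diff_singleton]
    exact Set.insert_eq_self.2 hu
  have := pathHt_insert h1 t
  rw [h2] at this
  omega

lemma pathHt_swap {w : Set (Fin n)} {u v : Fin n} (hu : u ∈ w) (hv : v ∉ w) (t : ℕ) :
    pathHt (insert v (w \ {u})) t + (if (u:ℕ) < t then 1 else 0)
      = pathHt w t + (if (v:ℕ) < t then 1 else 0) := by
  have h1 : v ∉ w \ {u} := fun h => hv h.1
  rw [pathHt_insert h1 t]
  have := pathHt_diff hu t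
  omega

lemma ncard_swap {w : Set (Fin n)} {u v : Fin n} (hu : u ∈ w) (hv : v ∉ w) :
    (insert v (w \ {u})).ncard = w.ncard := by
  rw [Set.ncard_insert_of_notMem (fun h => hv h.1) (Set.toFinite _),
    Set.ncard_diff_singleton_of_mem hu]
  have : 1 ≤ w.ncard := Set.ncard_pos (Set.toFinite _) |>.2 ⟨u, hu⟩
  omega
end B2

section C
variable {n : ℕ} [NeZero n]

lemma finRotate_pow_apply (t : ℕ) (x : Fin n) : ((finRotate n) ^ t) x = x + (t : Fin n) := by
  induction t generalizing x with
  | zero => simp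
  | succ t ih =>
    have hn : ∃ n', n = n' + 1 := ⟨n - 1, by have := NeZero.pos n; omega⟩
    obtain ⟨n', rfl⟩ := hn
    rw [pow_succ, Equiv.Perm.mul_apply, finRotate_succ_apply, ih]
    push_cast
    ring

lemma val_add_nat (y : Fin n) (t : ℕ) : (y + (t : Fin n)).val = ((y : ℕ) + t) % n := by
  rw [Fin.val_add, Fin.val_natCast, Nat.add_mod, Nat.mod_mod_of_dvd, ← Nat.add_mod]
  rfl
end C

section D
variable {n rr : ℕ} [NeZero n]

lemma interval_spec_mp
    (f l : Fin rr → Fin n) (A : Fin rr → Set (Fin n))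
    (hI : ∀ j, IsCycInterval (finRotate n) (f j) (l j) (A j))
    (j : Fin rr) (hnu : A j ≠ Set.univ) :
    ∃ d : ℕ, d + 2 ≤ n ∧ l j = f j + (d : Fin n) ∧
      ∀ x : Fin n, x ∈ A j ↔
        ((f j).val ≤ x.val ∧ x.val ≤ (f j).val + d) ∨
        ((f j).val ≤ x.val + n ∧ x.val + n ≤ (f j).val + d) := by
  obtain ⟨kj, hkl, hA⟩ := hI j
  have hmem : ∀ x : Fin n, x ∈ A j ↔ ∃ t ≤ kj, f j + (t : Fin n) = x := by
    intro x
    rw [hA]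
    simp only [Set.mem_setOf_eq, finRotate_pow_apply]
  rcases Nat.lt_or_ge kj (n - 1) with hkj | hkj
  swap
  · -- A j = univ, contradiction with antichain
    exfalso
    have huniv : A j = Set.univ := by
      apply Set.eq_univ_of_forall
      intro x
      rw [hmem]
      refine ⟨(x - f j).val, by (have := (x - f j).isLt; omega), ?_⟩
      rw [Fin.cast_val_eq_self]
      exact add_sub_cancel _ _
    exact hnu huniv
  · have hn1 : 1 ≤ n := NeZero.pos n
    refine ⟨kj, by omega, ?_, ?_⟩
    · rw [← hkl, finRotate_pow_apply]
    · intro x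
      rw [hmem]
      set a := (f j).val with ha
      have han : a < n := (f j).isLt
      have hxn : x.val < n := x.isLt
      constructor
      · rintro ⟨t, ht, rfl⟩
        have hval : (f j + (t : Fin n)).val = (a + t) % n := val_add_nat _ _
        have hmod : (a + t) % n = if a + t < n then a + t else a + t - n := by
          split_ifs with h
          · exact Nat.mod_eq_of_lt h
          · rw [Nat.mod_eq_sub_mod (by omega), Nat.mod_eq_of_lt (by omega)]
        rw [hmod] at hval
        split_ifs at hval with h
        · exact Or.inl (by omega)
        · exact Or.inr (by omega)
      · rintro (⟨h1, h2⟩ | ⟨h1, h2⟩)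
        · refine ⟨x.val - a, by omega, ?_⟩
          apply Fin.ext
          rw [val_add_nat]
          have : a + (x.val - a) = x.val := by omega
          rw [this, Nat.mod_eq_of_lt hxn]
        · refine ⟨x.val + n - a, by omega, ?_⟩
          apply Fin.ext
          rw [val_add_nat]
          have : a + (x.val + n - a) = x.val + n := by omega
          rw [this, Nat.add_mod_right, Nat.mod_eq_of_lt hxn]
end D

section E
variable {n rr k : ℕ}

lemma card_lt_of_sm {g : Fin rr → ℕ} (hg : StrictMono g) {t : ℕ} (s : Fin rr)
    (h : (s:ℕ) + 1 ≤ (Finset.univ.filter (fun j => g j < t)).card) : g s < t := by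
  by_contra hc
  have hsub : (Finset.univ.filter (fun j => g j < t)) ⊆ Finset.Iio s := by
    intro j hj
    simp only [Finset.mem_filter, Finset.mem_univ, true_and] at hj
    rw [Finset.mem_Iio]
    by_contra hj2
    push_neg at hj2
    exact absurd hj (not_lt.2 (le_trans (not_lt.1 hc) (hg.monotone hj2)))
  have := Finset.card_le_card hsub
  rw [Fin.card_Iio] at this
  omega

lemma card_ge_of_sm {g : Fin rr → ℕ} (hg : StrictMono g) {t : ℕ} (s : Fin rr)
    (h : g s < t) : (s:ℕ) + 1 ≤ (Finset.univ.filter (fun j => g j < t)).card := by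
  have hsub : Finset.Iic s ⊆ Finset.univ.filter (fun j => g j < t) := by
    intro j hj
    simp only [Finset.mem_filter, Finset.mem_univ, true_and]
    exact lt_of_le_of_lt (hg.monotone (Finset.mem_Iic.1 hj)) h
  have := Finset.card_le_card hsub
  rw [Fin.card_Iic] at this
  omega

lemma mem_upward_closed_iff' {S : Finset (Fin rr)}
    (hup : ∀ ⦃s s' : Fin rr⦄, s ∈ S → s ≤ s' → s' ∈ S)
    (w : ℕ) (hw : S.card = w) (s : Fin rr) : s ∈ S ↔ rr - w ≤ (s:ℕ) := by
  constructor
  · intro hs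
    have h1 : Finset.Ici s ⊆ S := fun s' hs' => hup hs (Finset.mem_Ici.1 hs')
    have := Finset.card_le_card h1
    rw [Fin.card_Ici] at this
    omega
  · intro hs
    by_contra hc
    have h1 : S ⊆ Finset.Ioi s := by
      intro s' hs'
      rw [Finset.mem_Ioi]
      by_contra h2
      push_neg at h2
      exact hc (hup hs' h2)
    have := Finset.card_le_card h1
    rw [Fin.card_Ioi] at this
    have hlt : (s:ℕ) < rr := s.isLt
    omega

lemma matching_lemma (hn : 0 < n) (a bv : Fin rr → ℕ) (A : Fin rr → Set (Fin n))
    (ha : ∀ j, a j < n) (hab : ∀ j, a j ≤ bv j) (hb2 : ∀ j, bv j + 2 ≤ a j + n)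
    (hmem : ∀ j (x : Fin n), x ∈ A j ↔
      (a j ≤ x.val ∧ x.val ≤ bv j) ∨ (a j ≤ x.val + n ∧ x.val + n ≤ bv j))
    (hkey : ∀ j j', j ≠ j' → a j ≤ a j' → bv j < bv j')
    (hW1 : ∀ j j', bv j < n → n ≤ bv j' → a j < a j')
    (hW3 : ∀ j j', n ≤ bv j → bv j' < n → bv j - n < bv j')
    (hk1 : 1 ≤ k) (hkcard : k - 1 = (Finset.univ.filter (fun j => n ≤ bv j)).card)
    (x : Fin rr → Fin n) (hx : StrictMono x)
    (i'' : ℕ) (hi1 : 1 ≤ i'') (hik : i'' ≤ k)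
    (hlow : ∀ t ≤ n, (univ.filter (fun j => bv j % n < t)).card
      ≤ i'' - 1 + (univ.filter (fun s => (x s).val < t)).card)
    (hupp : ∀ t ≤ n, i'' - 1 + (univ.filter (fun s => (x s).val < t)).card
      ≤ k - 1 + (univ.filter (fun j => a j < t)).card) :
    ∃ ψ : Fin rr → Fin rr, Function.Bijective ψ ∧ ∀ s, x s ∈ A (ψ s) := by
  rcases Nat.eq_zero_or_pos rr with hrr | hrr
  · subst hrr
    exact ⟨id, Function.bijective_id, fun s => s.elim0⟩
  haveI : NeZero rr := ⟨by omega⟩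
  -- injectivity of a
  have hainj : Function.Injective a := by
    intro j j' hjj
    by_contra hne
    have h1 := hkey j j' hne (le_of_eq hjj)
    have h2 := hkey j' j (Ne.symm hne) (le_of_eq hjj.symm)
    omega
  set e := Tuple.sort a with he
  have hstrict : StrictMono (fun s => a (e s)) :=
    (Tuple.monotone_sort a).strictMono_of_injective (hainj.comp e.injective)
  set endv := fun j => if n ≤ bv j then bv j - n else bv j with hendv
  have hendv_mod : ∀ j, bv j % n = endv j := by
    intro j
    have h1 := ha j
    have h2 := hab j
    have h3 := hb2 j
    simp only [hendv]
    split_ifs with h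
    · rw [Nat.mod_eq_sub_mod h, Nat.mod_eq_of_lt (by omega)]
    · exact Nat.mod_eq_of_lt (by omega)
  have hendv_lt : ∀ j, endv j < n := by
    intro j
    have h1 := ha j
    have h2 := hab j
    have h3 := hb2 j
    simp only [hendv]
    split_ifs with h <;> omega
  -- sorted wrap structure
  have hcardS : (Finset.univ.filter (fun s => n ≤ bv (e s))).card = k - 1 := by
    have hsum := Equiv.sum_comp e (fun j => if n ≤ bv j then (1:ℕ) else 0)
    rw [Finset.card_filter] at hkcard ⊢
    omega
  have hup : ∀ ⦃s s' : Fin rr⦄, s ∈ (Finset.univ.filter (fun s => n ≤ bv (e s))) →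
      s ≤ s' → s' ∈ (Finset.univ.filter (fun s => n ≤ bv (e s))) := by
    intro s s' hs hss
    simp only [Finset.mem_filter, Finset.mem_univ, true_and] at hs ⊢
    by_contra hc
    push_neg at hc
    rcases eq_or_lt_of_le hss with rfl | hlt
    · omega
    · have h1 : a (e s) < a (e s') := hstrict hlt
      have h2 := hW1 (e s') (e s) hc hs
      omega
  have wrapIff : ∀ s : Fin rr, n ≤ bv (e s) ↔ rr - (k - 1) ≤ s.val := by
    intro s
    have := mem_upward_closed_iff' hup (k - 1) hcardS s
    simpa using this
  set c := rr - (k - 1) with hcdef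
  have hk1rr : k - 1 ≤ rr := by
    have h1 : (Finset.univ.filter (fun j => n ≤ bv j)).card ≤ (Finset.univ : Finset (Fin rr)).card :=
      Finset.card_filter_le _ _
    rw [Finset.card_univ, Fintype.card_fin] at h1
    omega
  -- rotation
  set rot := Equiv.addRight ((c : Fin rr)) with hrotdef
  have hrotval : ∀ s : Fin rr, (rot s).val = (s.val + c) % rr := by
    intro s
    rw [hrotdef, Equiv.coe_addRight, val_add_nat]
  have hcler : c ≤ rr := by omega
  have hrotval' : ∀ s : Fin rr, (rot s).val =
      if s.val + c < rr then s.val + c else s.val + c - rr := by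
    intro s
    rw [hrotval]
    split_ifs with h
    · exact Nat.mod_eq_of_lt h
    · rw [Nat.mod_eq_sub_mod (by omega), Nat.mod_eq_of_lt (by have := s.isLt; omega)]
  set β := fun s : Fin rr => endv (e (rot s)) with hβdef
  have hane : ∀ j j' : Fin rr, a j < a j' → j ≠ j' := by
    intro j j' hlt hc
    rw [hc] at hlt
    omega
  have hβstrict : StrictMono β := by
    intro s s' hss
    have hval : s.val < s'.val := hss
    have hs1 := s.isLt
    have hs2 := s'.isLt
    simp only [hβdef]
    rcases Nat.lt_or_ge (s'.val + c) rr with h1 | h1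
    · -- both rotations are in the wrap zone
      have h2 : s.val + c < rr := by omega
      have hv1 : (rot s).val = s.val + c := by rw [hrotval']; simp [h2]
      have hv2 : (rot s').val = s'.val + c := by rw [hrotval']; simp [h1]
      have hw1 : n ≤ bv (e (rot s)) := (wrapIff _).2 (by omega)
      have hw2 : n ≤ bv (e (rot s')) := (wrapIff _).2 (by omega)
      have haa : a (e (rot s)) < a (e (rot s')) := hstrict (show rot s < rot s' by
        rw [Fin.lt_def, hv1, hv2]; omega)
      have := hkey (e (rot s)) (e (rot s')) (hane _ _ haa) (le_of_lt haa)
      simp only [hendv]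
      rw [if_pos hw1, if_pos hw2]
      omega
    · rcases Nat.lt_or_ge (s.val + c) rr with h2 | h2
      · -- s in wrap zone, s' in nonwrap zone
        have hv1 : (rot s).val = s.val + c := by rw [hrotval']; simp [h2]
        have hv2 : (rot s').val = s'.val + c - rr := by
          rw [hrotval']
          split_ifs with hh
          · omega
          · rfl
        have hw1 : n ≤ bv (e (rot s)) := (wrapIff _).2 (by omega)
        have hw2 : ¬ n ≤ bv (e (rot s')) := by
          rw [wrapIff]
          omega
        push_neg at hw2
        have := hW3 (e (rot s)) (e (rot s')) hw1 hw2
        simp only [hendv]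
        rw [if_pos hw1, if_neg (by omega)]
        omega
      · -- both in nonwrap zone
        have hv1 : (rot s).val = s.val + c - rr := by
          rw [hrotval']
          split_ifs with hh
          · omega
          · rfl
        have hv2 : (rot s').val = s'.val + c - rr := by
          rw [hrotval']
          split_ifs with hh
          · omega
          · rfl
        have hw1 : ¬ n ≤ bv (e (rot s)) := by rw [wrapIff]; omega
        have hw2 : ¬ n ≤ bv (e (rot s')) := by rw [wrapIff]; omega
        have haa : a (e (rot s)) < a (e (rot s')) := hstrict (show rot s < rot s' by
          rw [Fin.lt_def, hv1, hv2]; omega)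
        have := hkey (e (rot s)) (e (rot s')) (hane _ _ haa) (le_of_lt haa)
        push_neg at hw1 hw2
        simp only [hendv]
        rw [if_neg (by omega), if_neg (by omega)]
        omega
  -- count identities
  have hPcount : ∀ t, (univ.filter (fun j => bv j % n < t)).card
      = (univ.filter (fun s => β s < t)).card := by
    intro t
    have h1 : (univ.filter (fun j => bv j % n < t)).card
        = (univ.filter (fun j => endv j < t)).card := by
      apply congrArg Finset.card
      apply Finset.filter_congr
      intro j _
      rw [hendv_mod j]
    rw [h1]
    have hsum := Equiv.sum_comp ((Equiv.addRight ((c : Fin rr))).trans e)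
      (fun j => if endv j < t then (1:ℕ) else 0)
    rw [Finset.card_filter, Finset.card_filter]
    simp only [Equiv.trans_apply] at hsum
    rw [← hsum]
    rfl
  have hQcount : ∀ t, (univ.filter (fun j => a j < t)).card
      = (univ.filter (fun s => a (e s) < t)).card := by
    intro t
    have hsum := Equiv.sum_comp e (fun j => if a j < t then (1:ℕ) else 0)
    rw [Finset.card_filter, Finset.card_filter]
    omega
  have hxstrict : StrictMono (fun s => (x s).val) := fun s s' hss => hx hss
  -- pointwise bounds
  have hxle : ∀ s p : Fin rr, p.val = s.val + i'' - 1 → (x s).val ≤ β p := by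
    intro s p hp
    have ht : β p + 1 ≤ n := hendv_lt _
    have h1 : p.val + 1 ≤ (univ.filter (fun q => β q < β p + 1)).card :=
      card_ge_of_sm hβstrict p (by omega)
    have h2 := hlow (β p + 1) ht
    rw [hPcount] at h2
    have h3 : s.val + 1 ≤ (univ.filter (fun q => (x q).val < β p + 1)).card := by omega
    have := card_lt_of_sm hxstrict s h3
    omega
  have hxge : ∀ s q : Fin rr, (k - i'') ≤ s.val → q.val = s.val - (k - i'') →
      a (e q) ≤ (x s).val := by
    intro s q hks hq
    have ht : (x s).val + 1 ≤ n := (x s).isLt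
    have h1 : s.val + 1 ≤ (univ.filter (fun q' => (x q').val < (x s).val + 1)).card :=
      card_ge_of_sm hxstrict s (by omega)
    have h2 := hupp ((x s).val + 1) ht
    rw [hQcount] at h2
    have h3 : q.val + 1 ≤ (univ.filter (fun s' => a (e s') < (x s).val + 1)).card := by omega
    have := card_lt_of_sm hstrict q h3
    omega
  -- the matching
  set δ := k - i'' with hδdef
  have hδk : δ ≤ k - 1 := by omega
  have hδrr : δ ≤ rr := by omega
  refine ⟨fun s => e (s - (δ : Fin rr)), ?_, ?_⟩
  · have hb : Function.Bijective ((Equiv.subRight ((δ : Fin rr))).trans e) :=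
      ((Equiv.subRight ((δ : Fin rr))).trans e).bijective
    exact hb
  · intro s
    set q := s - (δ : Fin rr) with hqdef
    show x s ∈ A (e q)
    have hs1 := s.isLt
    have hxlt := (x s).isLt
    have hδm : δ % rr = δ ∨ (δ = rr ∧ δ % rr = 0) := by
      rcases Nat.lt_or_ge δ rr with h | h
      · exact Or.inl (Nat.mod_eq_of_lt h)
      · have : δ = rr := by omega
        exact Or.inr ⟨this, by rw [this]; exact Nat.mod_self rr⟩
    have hqval : q.val = (s.val + (rr - δ % rr)) % rr := by
      rw [hqdef, Fin.sub_def]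
      simp [Fin.val_natCast, Nat.add_comm]
    rcases Nat.lt_or_ge s.val δ with hcase | hcase
    · -- wrap-around case: q = s + rr - δ, interval wraps, use its initial segment
      have hq2 : q.val = s.val + rr - δ := by
        rcases hδm with h | ⟨h, h'⟩
        · rw [hqval, h, Nat.mod_eq_of_lt (by omega)]
          omega
        · rw [hqval, h', h]
          rw [Nat.sub_zero, Nat.add_mod_right, Nat.mod_eq_of_lt (by omega)]
          omega
      have hwq : c ≤ q.val := by omega
      have hwrap : n ≤ bv (e q) := (wrapIff q).2 (by omega)
      have hp : q.val - c < rr := by omega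
      set p : Fin rr := ⟨q.val - c, hp⟩ with hpdef
      have hrotp : rot p = q := by
        apply Fin.ext
        rw [hrotval]
        show (q.val - c + c) % rr = q.val
        have h2 : q.val - c + c = q.val := by omega
        rw [h2, Nat.mod_eq_of_lt q.isLt]
      have hβp : β p = bv (e q) - n := by
        show endv (e (rot p)) = bv (e q) - n
        rw [hrotp]
        show (if n ≤ bv (e q) then bv (e q) - n else bv (e q)) = bv (e q) - n
        rw [if_pos hwrap]
      have hpv : p.val = s.val + i'' - 1 := by
        show q.val - c = s.val + i'' - 1
        omega
      have hle := hxle s p hpv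
      rw [hβp] at hle
      have han := ha (e q)
      rw [hmem]
      exact Or.inr ⟨by omega, by omega⟩
    · -- direct case: q = s - δ
      have hδlt : δ < rr := by omega
      have hq1 : q.val = s.val - δ := by
        rcases hδm with h | ⟨h, h'⟩
        · rw [hqval, h]
          have h2 : s.val + (rr - δ) = (s.val - δ) + rr := by omega
          rw [h2, Nat.add_mod_right, Nat.mod_eq_of_lt (by omega)]
        · omega
      have hage := hxge s q hcase hq1
      rcases Nat.lt_or_ge q.val c with hnw | hw
      · -- nonwrap interval
        have hnwrap : ¬ n ≤ bv (e q) := by rw [wrapIff]; omega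
        push_neg at hnwrap
        have hp : q.val + (k - 1) < rr := by omega
        set p : Fin rr := ⟨q.val + (k - 1), hp⟩ with hpdef
        have hrotp : rot p = q := by
          apply Fin.ext
          rw [hrotval]
          show (q.val + (k - 1) + c) % rr = q.val
          have h2 : q.val + (k - 1) + c = q.val + rr := by omega
          rw [h2, Nat.add_mod_right, Nat.mod_eq_of_lt q.isLt]
        have hβp : β p = bv (e q) := by
          show endv (e (rot p)) = bv (e q)
          rw [hrotp]
          show (if n ≤ bv (e q) then bv (e q) - n else bv (e q)) = bv (e q)
          rw [if_neg (by omega)]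
        have hpv : p.val = s.val + i'' - 1 := by
          show q.val + (k - 1) = s.val + i'' - 1
          omega
        have hle := hxle s p hpv
        rw [hβp] at hle
        rw [hmem]
        exact Or.inl ⟨hage, hle⟩
      · -- wrap interval, use its final segment
        have hwrap : n ≤ bv (e q) := (wrapIff q).2 (by omega)
        rw [hmem]
        exact Or.inl ⟨hage, by omega⟩
end E

end StmtAux

/-- Characterization of internally active elements of a basis of a multi-path matroid,
via the diagram `D(ℐ,1) = (k, m, r, P, Q)` with ground set `Fin (m + r)` and `σ` the
standard cycle, relative to the natural linear order.  An element `u ∈ B` is internally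
active iff (a) all elements `≤ u` lie in `B`, or (b) the `u`-th step of `Π(B, p_i)` lies
in the top border `Q` (both of its endpoints are on `Q`) and the subpath of steps
`u+1, …, m+r` touches the bottom border `P`. -/
theorem stmt_17 (m r : ℕ) [NeZero (m + r)] (M : Matroid (Fin (m + r)))
    {rr : ℕ} (f l : Fin rr → Fin (m + r)) (A : Fin rr → Set (Fin (m + r)))
    (hpres : IsMultiPathPres M (finRotate (m + r)) f l A) (hE : M.E = Set.univ)
    (hrr : rr = r)
    (k : ℕ) (hk : k = 1 + {j : Fin rr | (0 : Fin (m + r)) ∈ A j ∧ f j ≠ 0}.ncard)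
    (P Q : Set (Fin (m + r)))
    (hP : P = {e | ∃ j, l j = e}) (hQ : Q = {e | ∃ j, f j = e})
    (B : Set (Fin (m + r))) (hB : M.IsBase B)
    (i : ℕ) (hvalid : IsBPath k m r P Q i B)
    (u : Fin (m + r)) (hu : u ∈ B) :
    (¬ ∃ v, v ∉ B ∧ v < u ∧ M.IsBase ((B \ {u}) ∪ {v})) ↔
      ({e : Fin (m + r) | e ≤ u} ⊆ B) ∨
      ((i - 1 + pathHt B (u : ℕ) = k - 1 + pathHt Q (u : ℕ) ∧
        i - 1 + pathHt B ((u : ℕ) + 1) = k - 1 + pathHt Q ((u : ℕ) + 1)) ∧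
       ∃ t, (u : ℕ) + 1 ≤ t ∧ t ≤ m + r ∧
          pathHt P t = i - 1 + pathHt B t) := by
  classical
  subst hrr
  obtain ⟨hcyc, hfE, hIcyc, hAC, hTrans⟩ := hpres
  have hInd : ∀ I : Set (Fin (m + rr)), M.Indep I ↔ I ⊆ M.E ∧
      ∃ φ : I → Fin rr, Function.Injective φ ∧ ∀ x : I, (x : Fin (m + rr)) ∈ A (φ x) :=
    hTrans.2
  obtain ⟨hi1, hik, hBr, hbounds⟩ := hvalid
  have hun : (u : ℕ) < m + rr := u.isLt
  -- (a) implies internal activity, in general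
  have haLHS : ({e : Fin (m + rr) | e ≤ u} ⊆ B) →
      (¬ ∃ v, v ∉ B ∧ v < u ∧ M.IsBase ((B \ {u}) ∪ {v})) := by
    rintro hsub ⟨v, hvB, hvu, -⟩
    exact hvB (hsub (le_of_lt hvu))
  have hswapeq : ∀ v : Fin (m + rr), (B \ {u}) ∪ {v} = insert v (B \ {u}) :=
    fun v => Set.union_singleton
  -- r = 0 case is vacuous
  rcases Nat.eq_zero_or_pos rr with hr0 | hr0
  · exfalso
    obtain ⟨-, φ, -, -⟩ := (hInd B).1 hB.indep
    have := (φ ⟨u, hu⟩).isLt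
    omega
  have hBcard : B.ncard = rr := by rw [← pathHt_univ_eq, hBr]
  by_cases huniv : ∃ j, A j = Set.univ
  · -- degenerate case: one interval which is everything (forces rr = 1)
    obtain ⟨j0, hj0⟩ := huniv
    have hall : ∀ j : Fin rr, j = j0 := by
      intro j
      by_contra hne
      exact hAC j j0 hne (by rw [hj0]; exact Set.subset_univ _)
    -- B = {u}
    have hBu : B = {u} := by
      obtain ⟨-, φ, hφinj, -⟩ := (hInd B).1 hB.indep
      apply Set.eq_singleton_iff_unique_mem.2 ⟨hu, ?_⟩
      intro y hy
      have h1 : φ ⟨y, hy⟩ = φ ⟨u, hu⟩ := by rw [hall (φ ⟨y, hy⟩), hall (φ ⟨u, hu⟩)]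
      exact congrArg Subtype.val (hφinj h1)
    have hsingleindep : ∀ y : Fin (m + rr), M.Indep {y} := by
      intro y
      rw [hInd]
      refine ⟨by rw [hE]; exact Set.subset_univ _, fun _ => j0, ?_, ?_⟩
      · intro z z' _
        apply Subtype.ext
        have hz := z.2
        have hz' := z'.2
        rw [Set.mem_singleton_iff] at hz hz'
        rw [hz, hz']
      · intro z
        rw [hj0]
        trivial
    have hsinglebase : ∀ y : Fin (m + rr), y ≠ u → M.IsBase (insert y (B \ {u})) := by
      intro y hy
      apply hB.exchange_isBase_of_indep (B := B) (e := u) (by rw [hBu]; simpa using hy)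
      have : insert y (B \ {u}) = {y} := by rw [hBu]; simp
      rw [this]
      exact hsingleindep y
    have hzle : ∀ e : Fin (m + rr), (0 : Fin (m + rr)) ≤ e := by
      intro e
      rw [Fin.le_def]
      have : ((0 : Fin (m + rr)) : ℕ) = 0 := rfl
      omega
    have hsingleHt : ∀ (y : Fin (m + rr)) t, pathHt ({y} : Set (Fin (m + rr))) t
        = if (y : ℕ) < t then 1 else 0 := by
      intro y t
      have h0 : ({y} : Set (Fin (m + rr))) = insert y ∅ := by simp
      rw [h0, pathHt_insert (Set.notMem_empty y), pathHt_emptyset, Nat.zero_add]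
    by_cases hu0 : u = 0
    · constructor
      · intro _
        left
        intro e he
        have : e = 0 := le_antisymm (hu0 ▸ he) (hzle e)
        rw [this, ← hu0]
        exact hu
      · intro _
        rintro ⟨v, -, hvu, -⟩
        rw [hu0] at hvu
        have : (v : ℕ) < 0 := by
          have h2 : ((0 : Fin (m + rr)) : ℕ) = 0 := rfl
          have := (Fin.lt_def).1 hvu
          omega
        omega
    · have hu0' : (u : ℕ) ≠ 0 := by
        intro h
        exact hu0 (Fin.ext (by simpa using h))
      constructor
      · intro hLHS
        exfalso
        apply hLHS
        refine ⟨0, ?_, ?_, ?_⟩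
        · rw [hBu]
          simpa using (Ne.symm hu0)
        · rw [Fin.lt_def]
          have : ((0 : Fin (m + rr)) : ℕ) = 0 := rfl
          omega
        · rw [hswapeq]
          exact hsinglebase 0 (Ne.symm hu0)
      · intro hRHS
        rintro -
        rcases hRHS with ha | ⟨⟨hq1e, hq2e⟩, t0, h1, h2, h3⟩
        · have h0 : (0 : Fin (m + rr)) ∈ B := ha (show (0 : Fin (m + rr)) ∈ {e | e ≤ u} from hzle u)
          rw [hBu, Set.mem_singleton_iff] at h0
          exact hu0 h0.symm
        · -- derive a contradiction from (b)
          have hQs : Q = {f j0} := by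
            rw [hQ]
            ext e
            simp only [Set.mem_setOf_eq, Set.mem_singleton_iff]
            constructor
            · rintro ⟨j, rfl⟩; rw [hall j]
            · rintro rfl; exact ⟨j0, rfl⟩
          have hPs : P = {l j0} := by
            rw [hP]
            ext e
            simp only [Set.mem_setOf_eq, Set.mem_singleton_iff]
            constructor
            · rintro ⟨j, rfl⟩; rw [hall j]
            · rintro rfl; exact ⟨j0, rfl⟩
          rw [hBu, hQs, hsingleHt, hsingleHt] at hq1e hq2e
          rw [hBu, hPs, hsingleHt, hsingleHt] at h3
          have hfu : ((f j0) : ℕ) = (u : ℕ) := by split_ifs at hq1e hq2e <;> omega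
          have hik' : i = k := by split_ifs at hq1e hq2e <;> omega
          have hi1' : i = 1 := by split_ifs at h3 <;> omega
          have hk2 : 2 ≤ k := by
            rw [hk]
            have hjm : j0 ∈ {j : Fin rr | (0 : Fin (m + rr)) ∈ A j ∧ f j ≠ 0} := by
              refine ⟨by rw [hj0]; trivial, ?_⟩
              intro hcon
              apply hu0'
              rw [← hfu, hcon]
              rfl
            have := Set.ncard_pos (Set.toFinite _) |>.2 ⟨j0, hjm⟩
            omega
          omega
  · -- main case: no interval is the whole ground set
    push_neg at huniv
    have hspec := fun j => interval_spec_mp f l A hIcyc j (huniv j)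
    choose dd hdd2 hddl hddmem using hspec
    have hav : ∀ j, (f j).val < m + rr := fun j => (f j).isLt
    have hkey : ∀ j j' : Fin rr, j ≠ j' → (f j).val ≤ (f j').val →
        (f j).val + dd j < (f j').val + dd j' := by
      intro j j' hne hle
      by_contra hcon
      push_neg at hcon
      apply hAC j' j (Ne.symm hne)
      intro x hx
      rw [hddmem j' x] at hx
      rw [hddmem j x]
      omega
    have hW1 : ∀ j j' : Fin rr, (f j).val + dd j < m + rr → m + rr ≤ (f j').val + dd j' →
        (f j).val < (f j').val := by
      intro j j' h1 h2
      by_contra hcon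
      push_neg at hcon
      have hne : j ≠ j' := by intro hcc; rw [hcc] at h1; omega
      apply hAC j j' hne
      intro x hx
      rw [hddmem j x] at hx
      rw [hddmem j' x]
      have := x.isLt
      omega
    have hW3 : ∀ j j' : Fin rr, m + rr ≤ (f j).val + dd j → (f j').val + dd j' < m + rr →
        (f j).val + dd j - (m + rr) < (f j').val + dd j' := by
      intro j j' h1 h2
      by_contra hcon
      push_neg at hcon
      have hne : j' ≠ j := by intro hcc; rw [hcc] at h2; omega
      apply hAC j' j hne
      intro x hx
      rw [hddmem j' x] at hx
      rw [hddmem j x]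
      have := x.isLt
      have := hav j
      omega
    have hf_inj : Function.Injective f := by
      intro j j' h
      by_contra hne
      have h1 := hkey j j' hne (le_of_eq (congrArg Fin.val h))
      have h2 := hkey j' j (Ne.symm hne) (le_of_eq (congrArg Fin.val h).symm)
      omega
    have hlval : ∀ j, (l j).val = ((f j).val + dd j) % (m + rr) := by
      intro j
      rw [hddl j, val_add_nat]
    have hmodv : ∀ j, ((f j).val + dd j) % (m + rr)
        = if m + rr ≤ (f j).val + dd j then (f j).val + dd j - (m + rr)
          else (f j).val + dd j := by
      intro j
      have h1 := hav j
      have h2 := hdd2 j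
      split_ifs with h
      · rw [Nat.mod_eq_sub_mod h, Nat.mod_eq_of_lt (by omega)]
      · exact Nat.mod_eq_of_lt (by omega)
    have hl_inj : Function.Injective l := by
      intro j j' h
      by_contra hne
      have hv : (l j).val = (l j').val := congrArg Fin.val h
      rw [hlval, hlval, hmodv, hmodv] at hv
      have e1 := hW3 j j'
      have e2 := hW3 j' j
      rcases le_total ((f j).val) ((f j').val) with h1 | h1
      · have hb := hkey j j' hne h1
        split_ifs at hv <;> omega
      · have hb := hkey j' j (Ne.symm hne) h1
        split_ifs at hv <;> omega
    have hk1 : 1 ≤ k := by omega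
    have hkcard : k - 1 = (Finset.univ.filter
        (fun j : Fin rr => m + rr ≤ (f j).val + dd j)).card := by
      have hset : {j : Fin rr | (0 : Fin (m + rr)) ∈ A j ∧ f j ≠ 0}
          = {j : Fin rr | m + rr ≤ (f j).val + dd j} := by
        ext j
        simp only [Set.mem_setOf_eq]
        rw [hddmem j 0]
        have h1 := hav j
        have h2 := hdd2 j
        have hz : ((0 : Fin (m + rr)) : ℕ) = 0 := rfl
        have hfz : f j ≠ 0 ↔ (f j).val ≠ 0 := by
          constructor
          · intro hh hc
            exact hh (Fin.ext (by simpa using hc))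
          · intro hh hc
            exact hh (by rw [hc]; rfl)
        rw [hfz, hz]
        omega
      rw [hk, hset]
      rw [Set.ncard_eq_toFinset_card', Set.toFinset_setOf]
      omega
    -- pathHt identifications
    have hQc : ∀ t, pathHt Q t
        = (Finset.univ.filter (fun j : Fin rr => (f j).val < t)).card := by
      intro t
      rw [hQ]
      exact pathHt_of_inj f hf_inj t
    have hPc : ∀ t, pathHt P t
        = (Finset.univ.filter (fun j : Fin rr => ((f j).val + dd j) % (m + rr) < t)).card := by
      intro t
      rw [hP, pathHt_of_inj l hl_inj t]
      apply congrArg Finset.card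
      apply Finset.filter_congr
      intro j _
      rw [hlval j]
    -- Step I: the master counting inequality for bases
    have hcount : ∀ X : Set (Fin (m + rr)), M.IsBase X → ∀ t t' : ℕ,
        pathHt P t + pathHt X t' ≤ (k - 1) + pathHt Q t' + pathHt X t := by
      intro X hX t t'
      obtain ⟨-, φ, hφinj, hφmem⟩ := (hInd X).1 hX.indep
      have hXcard : X.ncard = rr := by
        have h1 := hB.encard_eq_encard_of_isBase hX
        rw [Set.ncard_def, ← h1, ← Set.ncard_def, hBcard]
      have hfcard : Fintype.card X = rr := by
        rw [← Nat.card_eq_fintype_card, Nat.card_coe_set_eq, hXcard]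
      have hφbij : Function.Bijective φ := by
        rw [Fintype.bijective_iff_injective_and_card]
        exact ⟨hφinj, by rw [hfcard, Fintype.card_fin]⟩
      set g := (Equiv.ofBijective φ hφbij).symm with hg
      have hgmem : ∀ j, ((g j : Fin (m + rr))) ∈ A j := by
        intro j
        have h1 := hφmem (g j)
        have h2 : φ (g j) = j := by
          show (Equiv.ofBijective φ hφbij) ((Equiv.ofBijective φ hφbij).symm j) = j
          exact (Equiv.ofBijective φ hφbij).apply_symm_apply j
        rwa [h2] at h1
      have hginj : Function.Injective (fun j => ((g j : Fin (m + rr)))) :=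
        fun j j' h => g.injective (Subtype.ext h)
      have hXc : ∀ s, pathHt X s
          = (Finset.univ.filter (fun j : Fin rr => ((g j : Fin (m + rr))).val < s)).card := by
        intro s
        have hXeq : X = {e | ∃ j, ((g j : Fin (m + rr))) = e} := by
          ext y
          constructor
          · intro hy
            exact ⟨(Equiv.ofBijective φ hφbij) ⟨y, hy⟩,
              by rw [hg]; rw [Equiv.symm_apply_apply]⟩
          · rintro ⟨j, rfl⟩
            exact (g j).2
        conv_lhs => rw [hXeq]
        exact pathHt_of_inj _ hginj s
      rw [hPc, hQc, hXc, hXc]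
      exact count_key (NeZero.pos (m + rr)) (fun j => (f j).val)
        (fun j => (f j).val + dd j) (fun j => ((g j : Fin (m + rr))).val)
        (fun j => (hddmem j (g j)).1 (hgmem j))
        (fun j => by
          show (f j).val + dd j < 2 * (m + rr)
          have := hav j
          have := hdd2 j
          omega)
        hkcard t t'
    -- Step II: b-paths are independent
    have hIndep_of_path : ∀ X : Set (Fin (m + rr)), X.ncard = rr → ∀ i'', 1 ≤ i'' → i'' ≤ k →
        (∀ t ≤ m + rr, pathHt P t ≤ i'' - 1 + pathHt X t ∧
          i'' - 1 + pathHt X t ≤ k - 1 + pathHt Q t) →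
        M.Indep X := by
      intro X hXcard i'' h1 h2 hbnd
      have hXfin : X.toFinset.card = rr := by
        rw [← Set.ncard_eq_toFinset_card']
        exact hXcard
      set o := X.toFinset.orderIsoOfFin hXfin with ho
      set x : Fin rr → Fin (m + rr) := fun s => (o s : Fin (m + rr)) with hx
      have hxs : StrictMono x := by
        intro s s' hss
        show (↑(o s) : Fin (m + rr)) < ↑(o s')
        exact Subtype.coe_lt_coe.mpr (o.strictMono hss)
      have hXc : ∀ s', pathHt X s'
          = (Finset.univ.filter (fun s : Fin rr => (x s).val < s')).card := by
        intro s'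
        have hXeq : X = {e | ∃ s, x s = e} := by
          ext y
          constructor
          · intro hy
            refine ⟨o.symm ⟨y, Set.mem_toFinset.2 hy⟩, ?_⟩
            show (↑(o (o.symm ⟨y, Set.mem_toFinset.2 hy⟩)) : Fin (m + rr)) = y
            rw [OrderIso.apply_symm_apply]
          · rintro ⟨s, rfl⟩
            have := (o s).2
            rwa [Set.mem_toFinset] at this
        conv_lhs => rw [hXeq]
        exact pathHt_of_inj x hxs.injective s'
      obtain ⟨ψ, hψbij, hψmem⟩ := matching_lemma (NeZero.pos (m + rr))
        (fun j => (f j).val) (fun j => (f j).val + dd j) A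
        hav (fun j => Nat.le_add_right _ _)
        (fun j => by
          show (f j).val + dd j + 2 ≤ (f j).val + (m + rr)
          have := hdd2 j
          omega)
        hddmem hkey hW1 hW3 hk1 hkcard x hxs i'' h1 h2
        (fun t ht => by
          have hh := (hbnd t ht).1
          rw [hPc, hXc] at hh
          exact hh)
        (fun t ht => by
          have hh := (hbnd t ht).2
          rw [hQc, hXc] at hh
          exact hh)
      rw [hInd]
      refine ⟨by rw [hE]; exact Set.subset_univ _,
        fun y => ψ (o.symm ⟨y.1, Set.mem_toFinset.2 y.2⟩), ?_, ?_⟩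
      · intro y y' hyy
        have h3 := hψbij.1 hyy
        have h4 := o.symm.injective h3
        have h5 := congrArg Subtype.val h4
        exact Subtype.ext h5
      · intro y
        have h3 := hψmem (o.symm ⟨y.1, Set.mem_toFinset.2 y.2⟩)
        have h4 : x (o.symm ⟨y.1, Set.mem_toFinset.2 y.2⟩) = y.1 := by
          show (↑(o (o.symm ⟨y.1, Set.mem_toFinset.2 y.2⟩)) : Fin (m + rr)) = y.1
          rw [OrderIso.apply_symm_apply]
        rwa [h4] at h3
    -- helper to conclude in the forward direction
    have hswapHt : ∀ v : Fin (m + rr), v ∉ B → ∀ t,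
        pathHt (insert v (B \ {u})) t + (if (u : ℕ) < t then 1 else 0)
          = pathHt B t + (if (v : ℕ) < t then 1 else 0) :=
      fun v hv t => pathHt_swap hu hv t
    have hswapcard : ∀ v : Fin (m + rr), v ∉ B → (insert v (B \ {u})).ncard = rr :=
      fun v hv => by rw [ncard_swap hu hv, hBcard]
    constructor
    · -- forward: internally active → (a) ∨ (b)
      intro hLHS
      by_contra hcon
      rw [not_or] at hcon
      obtain ⟨hna, hnb⟩ := hcon
      have hfinal : ∀ v : Fin (m + rr), v ∉ B → v < u →
          M.Indep (insert v (B \ {u})) → False := by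
        intro v h1 h2 h3
        exact hLHS ⟨v, h1, h2, by rw [hswapeq]; exact hB.exchange_isBase_of_indep h1 h3⟩
      have hv0 : ∃ v : Fin (m + rr), v ∉ B ∧ v < u := by
        rw [Set.not_subset] at hna
        obtain ⟨e0, he1, he2⟩ := hna
        exact ⟨e0, he2, lt_of_le_of_ne he1 (fun h => he2 (h ▸ hu))⟩
      by_cases hstrictQ : i - 1 + pathHt B (u : ℕ) < k - 1 + pathHt Q (u : ℕ)
      · -- Case A: strictly below the upper border at step u
        set S := Finset.univ.filter (fun w : Fin (m + rr) => w ∉ B ∧ w < u) with hS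
        have hSne : S.Nonempty := by
          obtain ⟨v, h1, h2⟩ := hv0
          exact ⟨v, by simp [hS, h1, h2]⟩
        set v := S.max' hSne with hv
        have hvS : v ∈ S := S.max'_mem hSne
        have hvB : v ∉ B := by
          have := hvS
          rw [hS, Finset.mem_filter] at this
          exact this.2.1
        have hvu : v < u := by
          have := hvS
          rw [hS, Finset.mem_filter] at this
          exact this.2.2
        have hclosed : ∀ w : Fin (m + rr), v < w → w < u → w ∈ B := by
          intro w hw1 hw2
          by_contra hw
          have hwS : w ∈ S := by simp [hS, hw, hw2]
          have := S.le_max' w hwS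
          rw [← hv] at this
          exact absurd hw1 (not_lt.2 this)
        apply hfinal v hvB hvu
        apply hIndep_of_path _ (hswapcard v hvB) i hi1 hik
        intro t ht
        have hsw := hswapHt v hvB t
        have hb1 := (hbounds t ht).1
        have hb2 := (hbounds t ht).2
        have hvu' : (v : ℕ) < (u : ℕ) := hvu
        constructor
        · split_ifs at hsw <;> omega
        · rcases Nat.lt_or_ge (u : ℕ) t with hut | hut
          · split_ifs at hsw <;> omega
          · rcases Nat.lt_or_ge (v : ℕ) t with hvt | hvt
            · have hA1 : pathHt B t + ((u : ℕ) - t) ≤ pathHt B (u : ℕ) :=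
                pathHt_add_le B hut (by omega)
                  (fun j hj1 hj2 => hclosed j
                    (show (v : ℕ) < (j : ℕ) by omega)
                    (show (j : ℕ) < (u : ℕ) from hj2))
              have hA2 : pathHt Q (u : ℕ) ≤ pathHt Q t + ((u : ℕ) - t) :=
                pathHt_le_add Q hut
              split_ifs at hsw <;> omega
            · split_ifs at hsw <;> omega
      · -- Case B: step u is on the upper border
        push_neg at hstrictQ
        have hq1 : i - 1 + pathHt B (u : ℕ) = k - 1 + pathHt Q (u : ℕ) :=
          le_antisymm (hbounds (u : ℕ) (by omega)).2 hstrictQ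
        have hq2 : i - 1 + pathHt B ((u : ℕ) + 1) = k - 1 + pathHt Q ((u : ℕ) + 1) := by
          have hbp1 := (hbounds ((u : ℕ) + 1) (by omega)).2
          have hBstep : pathHt B ((u : ℕ) + 1) = pathHt B (u : ℕ) + 1 :=
            pathHt_succ_mem B hu rfl
          have hQstep := pathHt_succ_le Q (u : ℕ)
          have hQmono := pathHt_mono Q (Nat.le_succ (u : ℕ))
          omega
        have hnt : ∀ t, (u : ℕ) + 1 ≤ t → t ≤ m + rr →
            pathHt P t < i - 1 + pathHt B t := by
          intro t h1 h2
          have hb1 := (hbounds t h2).1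
          have hne : pathHt P t ≠ i - 1 + pathHt B t := fun hcon =>
            hnb ⟨⟨hq1, hq2⟩, t, h1, h2, hcon⟩
          omega
        have hPfull : pathHt P (m + rr) = rr := by
          rw [hPc]
          have : Finset.univ.filter
              (fun j : Fin rr => ((f j).val + dd j) % (m + rr) < m + rr)
              = Finset.univ := by
            apply Finset.filter_true_of_mem
            intro j _
            exact Nat.mod_lt _ (NeZero.pos _)
          rw [this, Finset.card_univ, Fintype.card_fin]
        have hi2 : 2 ≤ i := by
          have h1 := hnt (m + rr) (by omega) le_rfl
          rw [hPfull, hBr] at h1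
          omega
        by_cases hT : ∃ t, 1 ≤ t ∧ t ≤ (u : ℕ) ∧ pathHt P t = i - 1 + pathHt B t
        · -- there is a touch point before u : pick v below the first touch
          obtain ⟨ht1a, ht1b, ht1c⟩ := Nat.find_spec hT
          set t1 := Nat.find hT with ht1
          have hvex : ∃ v : Fin (m + rr), v ∉ B ∧ (v : ℕ) < t1 := by
            by_contra hc
            push_neg at hc
            have hfull : ∀ j : Fin (m + rr), (j : ℕ) < t1 → j ∈ B := by
              intro j hj
              by_contra hjB
              exact absurd hj (not_lt.2 (hc j hjB))
            have hge := pathHt_ge_full B (by omega) hfull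
            have hle := pathHt_le_self P t1
            omega
          obtain ⟨v, hvB, hvt1⟩ := hvex
          have hvu : v < u := show (v : ℕ) < (u : ℕ) by omega
          apply hfinal v hvB hvu
          apply hIndep_of_path _ (hswapcard v hvB) (i - 1) (by omega) (by omega)
          intro t ht
          have hsw := hswapHt v hvB t
          have hb1 := (hbounds t ht).1
          have hb2 := (hbounds t ht).2
          have hvu' : (v : ℕ) < (u : ℕ) := hvu
          constructor
          · rcases Nat.eq_zero_or_pos t with rfl | htpos
            · rw [pathHt_zero]
              omega
            · rcases Nat.lt_or_ge (u : ℕ) t with hut | hut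
              · have hstr := hnt t (by omega) ht
                split_ifs at hsw <;> omega
              · rcases Nat.lt_or_ge (v : ℕ) t with hvt | hvt
                · split_ifs at hsw <;> omega
                · have hmin : pathHt P t ≠ i - 1 + pathHt B t := by
                    intro hcon
                    have := Nat.find_min hT (show t < t1 by omega)
                    exact this ⟨htpos, by omega, hcon⟩
                  split_ifs at hsw <;> omega
          · split_ifs at hsw <;> omega
        · -- no touch point before u : any missing element below u works
          push_neg at hT
          obtain ⟨v, hvB, hvu⟩ := hv0
          apply hfinal v hvB hvu
          apply hIndep_of_path _ (hswapcard v hvB) (i - 1) (by omega) (by omega)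
          intro t ht
          have hsw := hswapHt v hvB t
          have hb1 := (hbounds t ht).1
          have hb2 := (hbounds t ht).2
          have hvu' : (v : ℕ) < (u : ℕ) := hvu
          constructor
          · rcases Nat.eq_zero_or_pos t with rfl | htpos
            · rw [pathHt_zero]
              omega
            · rcases Nat.lt_or_ge (u : ℕ) t with hut | hut
              · have hstr := hnt t (by omega) ht
                split_ifs at hsw <;> omega
              · rcases Nat.lt_or_ge (v : ℕ) t with hvt | hvt
                · split_ifs at hsw <;> omega
                · have hmin := hT t htpos (by omega)
                  split_ifs at hsw <;> omega
          · split_ifs at hsw <;> omega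
    · -- backward: (a) ∨ (b) → internally active
      intro hRHS
      rcases hRHS with ha | ⟨⟨hq1e, hq2e⟩, t0, ht01, ht02, ht0e⟩
      · exact haLHS ha
      · rintro ⟨v, hvB, hvu, hbase⟩
        rw [hswapeq] at hbase
        have hc := hcount _ hbase t0 (u : ℕ)
        have hs1 := hswapHt v hvB t0
        have hs2 := hswapHt v hvB (u : ℕ)
        have hvu' : (v : ℕ) < (u : ℕ) := hvu
        rw [if_pos (show (u : ℕ) < t0 by omega), if_pos (show (v : ℕ) < t0 by omega)] at hs1
        rw [if_neg (lt_irrefl (u : ℕ)), if_pos hvu'] at hs2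
        omega
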